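/- If f : ℝ → ℝ is an n-monomial (i.e. (1/n!) Δ_h^n f(x) = f(h) for all x, h), then for every h ≠ 0 and every rational r, f(r h) = r^n f(h). -/

import Mathlib

noncomputable def fdiff (h : ℝ) (f : ℝ → ℝ) : ℝ → ℝ := fun x => f (x + h) - f x

def IsMonomial (n : ℕ) (f : ℝ → ℝ) : Prop :=
  ∀ x h : ℝ, (1 / (n.factorial : ℝ)) * ((fdiff h)^[n] f) x = f h

lemma fdiff_iter_translate (h c : ℝ) (n : ℕ) : ∀ (g : ℝ → ℝ) (x : ℝ),
    (fdiff h)^[n] (fun y => g (y + c)) x = (fdiff h)^[n] g (x + c) := by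
  induction n with
  | zero => intro g x; simp
  | succ n ih =>
    intro g x
    rw [Function.iterate_succ_apply, Function.iterate_succ_apply]
    have : fdiff h (fun y => g (y + c)) = fun y => (fdiff h g) (y + c) := by
      funext y
      simp only [fdiff]
      ring_nf
    rw [this, ih]

lemma fdiff_iter_negfun (h : ℝ) (n : ℕ) : ∀ (g : ℝ → ℝ) (x : ℝ),
    (fdiff h)^[n] (fun y => -(g y)) x = -((fdiff h)^[n] g x) := by
  induction n with
  | zero => intro g x; simp
  | succ n ih =>
    intro g x
    rw [Function.iterate_succ_apply, Function.iterate_succ_apply]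
    have : fdiff h (fun y => -(g y)) = fun y => -(fdiff h g y) := by
      funext y; simp [fdiff]; ring
    rw [this, ih]

lemma fdiff_iter_sum (h : ℝ) (n : ℕ) : ∀ (m : ℕ) (u : ℕ → ℝ → ℝ) (x : ℝ),
    (fdiff h)^[n] (fun y => ∑ j ∈ Finset.range m, u j y) x
      = ∑ j ∈ Finset.range m, (fdiff h)^[n] (u j) x := by
  induction n with
  | zero => intro m u x; simp
  | succ n ih =>
    intro m u x
    rw [Function.iterate_succ_apply]
    have : fdiff h (fun y => ∑ j ∈ Finset.range m, u j y)
        = fun y => ∑ j ∈ Finset.range m, fdiff h (u j) y := by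
      funext y
      simp [fdiff, Finset.sum_sub_distrib]
    rw [this, ih]
    exact Finset.sum_congr rfl (fun j _ => by rw [Function.iterate_succ_apply])

lemma fdiff_nat_mul (h : ℝ) (g : ℝ → ℝ) : ∀ (m : ℕ) (x : ℝ),
    fdiff ((m : ℝ) * h) g x = ∑ j ∈ Finset.range m, fdiff h g (x + (j : ℝ) * h) := by
  intro m
  induction m with
  | zero => intro x; simp [fdiff]
  | succ m ih =>
    intro x
    rw [Finset.sum_range_succ, ← ih]
    simp only [fdiff]
    push_cast
    ring_nf

lemma key (h : ℝ) (m : ℕ) : ∀ (n : ℕ) (g : ℝ → ℝ) (c : ℝ),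
    (∀ x, (fdiff h)^[n] g x = c) →
    ∀ x, (fdiff ((m : ℝ) * h))^[n] g x = (m : ℝ) ^ n * c := by
  intro n
  induction n with
  | zero => intro g c hg x; simpa using hg x
  | succ n ih =>
    intro g c hg x
    rw [Function.iterate_succ_apply]
    have hg' : fdiff ((m : ℝ) * h) g
        = fun y => ∑ j ∈ Finset.range m, (fun z => fdiff h g (z + (j : ℝ) * h)) y := by
      funext y; exact fdiff_nat_mul h g m y
    have hconst : ∀ x, (fdiff h)^[n] (fdiff ((m : ℝ) * h) g) x = (m : ℝ) * c := by
      intro x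
      rw [hg', fdiff_iter_sum]
      have : ∀ j ∈ Finset.range m,
          (fdiff h)^[n] (fun z => fdiff h g (z + (j : ℝ) * h)) x = c := by
        intro j _
        rw [fdiff_iter_translate]
        rw [← Function.iterate_succ_apply]
        exact hg _
      rw [Finset.sum_congr rfl this]
      simp
    have := ih (fdiff ((m : ℝ) * h) g) ((m : ℝ) * c) hconst x
    rw [this]; ring

lemma fdiff_iter_neg (h : ℝ) : ∀ (n : ℕ) (g : ℝ → ℝ) (x : ℝ),
    (fdiff (-h))^[n] g x = (-1 : ℝ) ^ n * (fdiff h)^[n] g (x - (n : ℝ) * h) := by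
  intro n
  induction n with
  | zero => intro g x; simp
  | succ n ih =>
    intro g x
    rw [Function.iterate_succ_apply, ih]
    have : fdiff (-h) g = fun y => -((fun z => fdiff h g (z + (-h))) y) := by
      funext y; simp only [fdiff]; ring
    rw [this, fdiff_iter_negfun, fdiff_iter_translate, ← Function.iterate_succ_apply]
    have harg : x - (n : ℝ) * h + -h = x - ((n : ℕ) + 1 : ℝ) * h := by ring
    rw [harg]
    push_cast
    ring

theorem stmt3 (n : ℕ) (f : ℝ → ℝ) (hf : IsMonomial n f) (h : ℝ) (hh : h ≠ 0) (r : ℚ) :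
    f ((r : ℝ) * h) = (r : ℝ) ^ n * f h := by
  have hfac : (n.factorial : ℝ) ≠ 0 := Nat.cast_ne_zero.mpr n.factorial_ne_zero
  have hconst : ∀ (t x : ℝ), (fdiff t)^[n] f x = (n.factorial : ℝ) * f t := by
    intro t x
    have := hf x t
    field_simp at this
    linarith [this]
  -- natural homogeneity
  have hnat : ∀ (m : ℕ) (t : ℝ), f ((m : ℝ) * t) = (m : ℝ) ^ n * f t := by
    intro m t
    have h1 := key t m n f ((n.factorial : ℝ) * f t) (hconst t) 0
    have h2 := hconst ((m : ℝ) * t) 0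
    rw [h2] at h1
    have : (n.factorial : ℝ) * f ((m : ℝ) * t)
        = (n.factorial : ℝ) * ((m : ℝ) ^ n * f t) := by rw [h1]; ring
    exact mul_left_cancel₀ hfac this
  -- negation
  have hneg : ∀ (t : ℝ), f (-t) = (-1 : ℝ) ^ n * f t := by
    intro t
    have h1 := fdiff_iter_neg t n f 0
    rw [hconst (-t) 0, hconst t (0 - (n : ℝ) * t)] at h1
    have : (n.factorial : ℝ) * f (-t)
        = (n.factorial : ℝ) * ((-1 : ℝ) ^ n * f t) := by rw [h1]; ring
    exact mul_left_cancel₀ hfac this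
  -- integer homogeneity
  have hint : ∀ (p : ℤ) (t : ℝ), f ((p : ℝ) * t) = (p : ℝ) ^ n * f t := by
    intro p t
    obtain ⟨m, rfl | rfl⟩ := p.eq_nat_or_neg
    · push_cast; exact hnat m t
    · push_cast
      have : -(m : ℝ) * t = -((m : ℝ) * t) := by ring
      rw [this, hneg, hnat]
      ring
  -- rationals
  have hden : ((r.den : ℝ)) ≠ 0 := Nat.cast_ne_zero.mpr r.den_nz
  set t : ℝ := h / (r.den : ℝ) with ht
  have hht : h = (r.den : ℝ) * t := by rw [ht]; field_simp
  have hfh : f h = (r.den : ℝ) ^ n * f t := by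
    rw [hht]; exact hnat r.den t
  have hrh : (r : ℝ) * h = (r.num : ℝ) * t := by
    rw [Rat.cast_def, ht]; field_simp
  rw [hrh, hint r.num t, hfh, Rat.cast_def]
  field_simp
  have e : ((r.num : ℝ) / r.den) ^ n * (r.den : ℝ) ^ n = (r.num : ℝ) ^ n := by
    rw [← mul_pow, div_mul_cancel₀ _ hden]
  linear_combination (-(f t)) * e
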